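/- Let R = ℚ[c₁,c₂,c₃]. For every integer d ≥ 1, the remainder of h²·((d−1)³h³ − (d−1)²c₁h² + (d−1)c₂h − c₃) upon division by h³ + c₁h² + c₂h + c₃ in R[h] has coefficient of h² equal to −d(d²−3d+3)·c₃ + d(d−1)(2d−3)·c₁c₂ − d(d−1)²·c₁³. -/
import Mathlib


noncomputable section

abbrev R3 : Type := MvPolynomial (Fin 3) ℚ

noncomputable def cc (i : Fin 3) : R3 := MvPolynomial.X i

/-- The monic cubic relation h³ + c₁h² + c₂h + c₃. -/
noncomputable def Mrel : Polynomial R3 :=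
  Polynomial.X ^ 3 + Polynomial.C (cc 0) * Polynomial.X ^ 2 +
    Polynomial.C (cc 1) * Polynomial.X + Polynomial.C (cc 2)

/-- The equivariant Euler class (d−1)³h³ − (d−1)²c₁h² + (d−1)c₂h − c₃. -/
noncomputable def Ecl (d : ℕ) : Polynomial R3 :=
  Polynomial.C (((d : R3) - 1) ^ 3) * Polynomial.X ^ 3
    - Polynomial.C (((d : R3) - 1) ^ 2 * cc 0) * Polynomial.X ^ 2
    + Polynomial.C (((d : R3) - 1) * cc 1) * Polynomial.X
    - Polynomial.C (cc 2)

noncomputable def qA (d : ℕ) : R3 :=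
  -(d : R3) * ((d : R3) ^ 2 - 3 * (d : R3) + 3) * cc 2
      + (d : R3) * ((d : R3) - 1) * (2 * (d : R3) - 3) * (cc 0 * cc 1)
      - (d : R3) * ((d : R3) - 1) ^ 2 * cc 0 ^ 3

noncomputable def qB (d : ℕ) : R3 :=
  cc 0 * ((d : R3) - 1) ^ 2 * (d : R3) * cc 2
    - cc 1 ^ 2 * ((d : R3) - 1) * (d : R3) * (2 - (d : R3))
    - cc 0 ^ 2 * cc 1 * ((d : R3) - 1) ^ 2 * (d : R3)

noncomputable def qC (d : ℕ) : R3 :=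
  - (cc 1 * ((d : R3) - 1) * (d : R3) * (2 - (d : R3)) * cc 2)
    - cc 0 ^ 2 * ((d : R3) - 1) ^ 2 * (d : R3) * cc 2

noncomputable def rpoly (d : ℕ) : Polynomial R3 :=
  Polynomial.C (qA d) * Polynomial.X ^ 2 + Polynomial.C (qB d) * Polynomial.X
    + Polynomial.C (qC d)

noncomputable def qpoly (d : ℕ) : Polynomial R3 :=
  Polynomial.C (((d : R3) - 1) ^ 3) * Polynomial.X ^ 2
    + Polynomial.C (-(cc 0) * ((d : R3) - 1) ^ 2 * (d : R3)) * Polynomial.X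
    + Polynomial.C (cc 1 * ((d : R3) - 1) * (d : R3) * (2 - (d : R3))
        + cc 0 ^ 2 * ((d : R3) - 1) ^ 2 * (d : R3))

lemma Mrel_monic : Mrel.Monic := by
  have h : Mrel = Polynomial.X ^ 3 + (Polynomial.C (cc 0) * Polynomial.X ^ 2
      + Polynomial.C (cc 1) * Polynomial.X + Polynomial.C (cc 2)) := by
    unfold Mrel; ring
  rw [h]
  exact Polynomial.monic_X_pow_add
    (lt_of_le_of_lt Polynomial.degree_quadratic_le (by norm_num))

theorem stmt_2 (d : ℕ) (hd : 1 ≤ d) :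
    ((Polynomial.X ^ 2 * Ecl d) %ₘ Mrel).coeff 2
    = -(d : R3) * ((d : R3) ^ 2 - 3 * (d : R3) + 3) * cc 2
      + (d : R3) * ((d : R3) - 1) * (2 * (d : R3) - 3) * (cc 0 * cc 1)
      - (d : R3) * ((d : R3) - 1) ^ 2 * cc 0 ^ 3 := by
  have hM : Mrel.Monic := Mrel_monic
  have hid : Polynomial.X ^ 2 * Ecl d = rpoly d + qpoly d * Mrel := by
    unfold Ecl rpoly qpoly Mrel qA qB qC
    simp only [map_add, map_sub, map_mul, map_pow, map_neg, map_one, map_ofNat]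
    ring
  have hdeg : (rpoly d).degree < Mrel.degree := by
    have h1 : (rpoly d).degree ≤ 2 := Polynomial.degree_quadratic_le
    have h2 : Mrel.degree = 3 := by
      unfold Mrel
      compute_degree!
    rw [h2]
    exact lt_of_le_of_lt h1 (by norm_num)
  rw [hid, Polynomial.add_modByMonic, Polynomial.mul_self_modByMonic hM, add_zero,
    (Polynomial.modByMonic_eq_self_iff hM).2 hdeg]
  show (rpoly d).coeff 2 = qA d
  unfold rpoly
  simp only [Polynomial.coeff_add, Polynomial.coeff_C_mul, Polynomial.coeff_X_pow,
    Polynomial.coeff_X, Polynomial.coeff_C]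
  norm_num
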